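/- For continuous paths $Q, U : [0,T] \to S^d_{++}$, define $F(Q)_t$ as the covariance of the linear SDE driven by drift matrix $A - \tfrac{1}{2}Q_t H^\top H$ (as above). Then for $t \le T$, $\sup_{s\le t}\|F(Q)_s - F(U)_s\|_2 \le C \int_0^t \sup_{\tau \le s}\|Q_\tau - U_\tau\|_2\, ds$, where $C = e^{2\kappa t}\|H^\top H\|_2 \sup_{s \le t}\|F(U)_s\|_2$ and $\kappa = \|A\|_2 + \tfrac12 \sup_{s\le t}\|Q_s\|_2\|H^\top H\|_2$. -/

import Mathlib

open Matrix

attribute [local instance] Matrix.frobeniusNormedAddCommGroup Matrix.frobeniusNormedSpace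

/-- The spectral (ℓ²-operator) norm of a real square matrix. -/
noncomputable def specNorm {d : ℕ} (M : Matrix (Fin d) (Fin d) ℝ) : ℝ :=
  ‖(Matrix.toEuclideanCLM (𝕜 := ℝ) M : EuclideanSpace ℝ (Fin d) →L[ℝ] EuclideanSpace ℝ (Fin d))‖

open Set

set_option synthInstance.maxHeartbeats 1000000
set_option maxHeartbeats 4000000

namespace Stmt8Aux

noncomputable def φL (d : ℕ) :
    Matrix (Fin d) (Fin d) ℝ →L[ℝ] (EuclideanSpace ℝ (Fin d) →L[ℝ] EuclideanSpace ℝ (Fin d)) :=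
  LinearMap.toContinuousLinearMap
  { toFun := fun M => Matrix.toEuclideanCLM (𝕜 := ℝ) M
    map_add' := fun M N => map_add _ M N
    map_smul' := fun c M => map_smul (Matrix.toEuclideanCLM (𝕜 := ℝ)) c M }

variable {d : ℕ}

lemma specNorm_eq (M : Matrix (Fin d) (Fin d) ℝ) : specNorm M = ‖φL d M‖ := rfl

lemma specNorm_nonneg (M : Matrix (Fin d) (Fin d) ℝ) : 0 ≤ specNorm M := norm_nonneg _

lemma specNorm_add_le (M N : Matrix (Fin d) (Fin d) ℝ) :
    specNorm (M + N) ≤ specNorm M + specNorm N := by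
  rw [specNorm_eq, map_add]; exact norm_add_le _ _

lemma specNorm_sub_le (M N : Matrix (Fin d) (Fin d) ℝ) :
    specNorm (M - N) ≤ specNorm M + specNorm N := by
  rw [specNorm_eq, map_sub]; exact norm_sub_le _ _

lemma specNorm_mul_le (M N : Matrix (Fin d) (Fin d) ℝ) :
    specNorm (M * N) ≤ specNorm M * specNorm N := by
  show ‖Matrix.toEuclideanCLM (𝕜 := ℝ) (M * N)‖ ≤ _
  rw [_root_.map_mul]; exact norm_mul_le _ _

lemma specNorm_smul (c : ℝ) (M : Matrix (Fin d) (Fin d) ℝ) :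
    specNorm (c • M) = |c| * specNorm M := by
  rw [specNorm_eq, _root_.map_smul]
  exact norm_smul c (φL d M)

lemma specNorm_transpose (M : Matrix (Fin d) (Fin d) ℝ) : specNorm Mᵀ = specNorm M := by
  have h : Mᵀ = star M := by ext i j; simp [Matrix.conjTranspose_apply]
  show ‖Matrix.toEuclideanCLM (𝕜 := ℝ) Mᵀ‖ = ‖Matrix.toEuclideanCLM (𝕜 := ℝ) M‖
  rw [h, map_star, ContinuousLinearMap.star_eq_adjoint]
  exact LinearIsometryEquiv.norm_map ContinuousLinearMap.adjoint _

/-- Continuity of the running sup of a continuous function. -/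
lemma runningSup_continuousOn {g : ℝ → ℝ} {t : ℝ} (ht : 0 ≤ t)
    (hg : ContinuousOn g (Icc 0 t)) :
    ContinuousOn (fun s => sSup (g '' Icc 0 s)) (Icc 0 t) := by
  have hUC : UniformContinuousOn g (Icc 0 t) :=
    isCompact_Icc.uniformContinuousOn_of_continuous hg
  rw [Metric.uniformContinuousOn_iff] at hUC
  intro s hs
  rw [Metric.continuousWithinAt_iff]
  intro ε hε
  obtain ⟨δ, hδ, hδ'⟩ := hUC (ε / 2) (by linarith)
  refine ⟨δ, hδ, fun {s'} hs' hd => ?_⟩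
  have key : ∀ a ∈ Icc 0 t, ∀ b ∈ Icc 0 t, |a - b| < δ →
      sSup (g '' Icc 0 a) ≤ sSup (g '' Icc 0 b) + ε / 2 := by
    intro a ha b hb hab
    have hne : (g '' Icc 0 a).Nonempty := ⟨g 0, mem_image_of_mem _ (by constructor <;> [rfl; exact ha.1])⟩
    have hbdd : BddAbove (g '' Icc 0 b) :=
      (isCompact_Icc.image_of_continuousOn (hg.mono (Icc_subset_Icc le_rfl hb.2))).bddAbove
    apply csSup_le hne
    rintro x ⟨τ, hτ, rfl⟩
    by_cases hτb : τ ≤ b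
    · have : g τ ≤ sSup (g '' Icc 0 b) := le_csSup hbdd (mem_image_of_mem _ ⟨hτ.1, hτb⟩)
      linarith
    · push_neg at hτb
      have hτt : τ ∈ Icc (0:ℝ) t := ⟨hτ.1, hτ.2.trans ha.2⟩
      have h1 : |τ - b| < δ := by
        rw [abs_sub_lt_iff] at hab ⊢
        constructor <;> [linarith [hτ.2]; linarith]
      have h2 : dist (g τ) (g b) < ε / 2 := hδ' τ hτt b hb (by rwa [Real.dist_eq])
      rw [Real.dist_eq, abs_sub_lt_iff] at h2
      have : g b ≤ sSup (g '' Icc 0 b) := le_csSup hbdd (mem_image_of_mem _ ⟨hb.1, le_rfl⟩)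
      linarith
  have hdist : |s' - s| < δ := by rwa [Real.dist_eq] at hd
  have h1 := key s' hs' s hs hdist
  have h2 := key s hs s' hs' (by rwa [abs_sub_comm])
  rw [Real.dist_eq]
  rw [abs_sub_lt_iff]
  constructor <;> linarith

/-- Grönwall-type estimate with time-dependent inhomogeneity. -/
lemma gronwall_aux {E : Type*} [NormedAddCommGroup E] [NormedSpace ℝ E]
    {f f' : ℝ → E} {h : ℝ → ℝ} {t K c : ℝ} (hK : 0 ≤ K) (hc : 0 ≤ c)
    (hcont : ContinuousOn f (Icc 0 t))
    (hder : ∀ s ∈ Ico (0:ℝ) t, HasDerivWithinAt f (f' s) (Ici s) s)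
    (hf0 : f 0 = 0)
    (hh : Continuous h) (hh0 : ∀ s, 0 ≤ h s)
    (hbound : ∀ s ∈ Ico (0:ℝ) t, ‖f' s‖ ≤ K * ‖f s‖ + c * h s) :
    ∀ s ∈ Icc (0:ℝ) t, ‖f s‖ ≤ Real.exp (K * s) * (c * ∫ u in (0:ℝ)..s, h u) := by
  intro s hs
  have hI : ∀ x : ℝ, HasDerivAt (fun u => ∫ v in (0:ℝ)..u, h v) (h x) x := fun x =>
    intervalIntegral.integral_hasDerivAt_right (hh.intervalIntegrable 0 x)
      (hh.stronglyMeasurable.stronglyMeasurableAtFilter) hh.continuousAt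
  refine le_of_forall_pos_le_add fun ε' hε' => ?_
  set ε : ℝ := ε' / Real.exp ((K + 1) * t) with hεdef
  have hεpos : 0 < ε := div_pos hε' (Real.exp_pos _)
  set B : ℝ → ℝ := fun x =>
    Real.exp (K * x) * (c * ∫ v in (0:ℝ)..x, h v) + ε * Real.exp ((K + 1) * x) with hBdef
  set B' : ℝ → ℝ := fun x =>
    (K * Real.exp (K * x)) * (c * ∫ v in (0:ℝ)..x, h v) + Real.exp (K * x) * (c * h x)
      + ε * ((K + 1) * Real.exp ((K + 1) * x)) with hB'def
  have hB : ∀ x, HasDerivAt B (B' x) x := by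
    intro x
    have e1 : HasDerivAt (fun u : ℝ => Real.exp (K * u)) (Real.exp (K * x) * K) x := by
      simpa using ((hasDerivAt_id x).const_mul K).exp
    have e2 : HasDerivAt (fun u : ℝ => Real.exp ((K + 1) * u)) (Real.exp ((K + 1) * x) * (K + 1)) x := by
      simpa using ((hasDerivAt_id x).const_mul (K + 1)).exp
    have e3 : HasDerivAt (fun u : ℝ => c * ∫ v in (0:ℝ)..u, h v) (c * h x) x :=
      (hI x).const_mul c
    have := (e1.mul e3).add (e2.const_mul ε)
    convert this using 1
    · rfl
    · rfl
    · rfl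
    · ring
  have hInonneg : ∀ x, 0 ≤ x → 0 ≤ ∫ v in (0:ℝ)..x, h v := fun x hx =>
    intervalIntegral.integral_nonneg hx (fun u _ => hh0 u)
  have key : ∀ x ∈ Icc (0:ℝ) t, ‖f x‖ ≤ B x := by
    apply image_norm_le_of_norm_deriv_right_lt_deriv_boundary hcont hder _ hB
    · intro x hx hfx
      have hx0 : 0 ≤ x := hx.1
      have hexp1 : (1:ℝ) ≤ Real.exp (K * x) := Real.one_le_exp (by positivity)
      have hexp2 : (1:ℝ) ≤ Real.exp ((K + 1) * x) := Real.one_le_exp (by positivity)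
      calc ‖f' x‖ ≤ K * ‖f x‖ + c * h x := hbound x hx
        _ = K * B x + c * h x := by rw [hfx]
        _ < B' x := by
            rw [hBdef, hB'def]
            simp only []
            have h1 : c * h x ≤ Real.exp (K * x) * (c * h x) :=
              le_mul_of_one_le_left (mul_nonneg hc (hh0 x)) hexp1
            nlinarith [h1, mul_pos hεpos (Real.exp_pos ((K + 1) * x)), hInonneg x hx0,
              mul_nonneg hc (hh0 x)]
    · rw [hf0, hBdef]
      simp only [norm_zero, intervalIntegral.integral_same, mul_zero, zero_add]
      positivity
      
  have hBs := key s hs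
  have : ε * Real.exp ((K + 1) * s) ≤ ε' := by
    rw [hεdef]
    rw [div_mul_eq_mul_div, div_le_iff₀ (Real.exp_pos _)]
    have : Real.exp ((K + 1) * s) ≤ Real.exp ((K + 1) * t) := by
      apply Real.exp_le_exp.2
      have := hs.2
      nlinarith [hs.1]
    nlinarith [le_of_lt hε']
  calc ‖f s‖ ≤ B s := hBs
    _ ≤ Real.exp (K * s) * (c * ∫ u in (0:ℝ)..s, h u) + ε' := by
        rw [hBdef]; simp only []; linarith



lemma lyapunov_diff_identity {d m : ℕ} (A : Matrix (Fin d) (Fin d) ℝ)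
    (H : Matrix (Fin m) (Fin d) ℝ)
    (SB Qs Us FQs FUs : Matrix (Fin d) (Fin d) ℝ) (hQs : Qsᵀ = Qs) (hUs : Usᵀ = Us) :
    ((A - (1/2 : ℝ) • (Qs * Hᵀ * H)) * FQs + FQs * (A - (1/2 : ℝ) • (Qs * Hᵀ * H))ᵀ + SB)
      - ((A - (1/2 : ℝ) • (Us * Hᵀ * H)) * FUs + FUs * (A - (1/2 : ℝ) • (Us * Hᵀ * H))ᵀ + SB)
    = (A - (1/2 : ℝ) • (Qs * Hᵀ * H)) * (FQs - FUs)
      + (FQs - FUs) * (A - (1/2 : ℝ) • (Qs * Hᵀ * H))ᵀ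
      + ((-(1/2 : ℝ)) • ((Qs - Us) * (Hᵀ * H) * FUs)
        + (-(1/2 : ℝ)) • (FUs * (Hᵀ * H) * (Qs - Us))) := by
  simp only [transpose_sub, transpose_smul, transpose_mul, transpose_transpose, hQs, hUs]
  simp only [sub_mul, mul_sub, smul_mul_assoc, mul_smul_comm, mul_add, add_mul, neg_smul,
    smul_sub, Matrix.mul_assoc]
  abel

end Stmt8Aux

open Stmt8Aux

/-- Lipschitz estimate for the covariance map `Q ↦ F(Q)`.
The covariances `F(Q), F(U)` solve the Lyapunov ODEs with drifts `√Ricc(Qₜ) = A - ½QₜHᵀH`,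
resp. `√Ricc(Uₜ)`, and their difference solves
`d/dt (F(Q)-F(U)) = √Ricc(Q)(F(Q)-F(U)) + (F(Q)-F(U))√Ricc(Q)ᵀ + ½(Q-U)HᵀH F(U) + ½F(U)HᵀH(Q-U)`.
Then `sup_{s≤t}‖F(Q)_s - F(U)_s‖₂ ≤ C ∫₀ᵗ sup_{τ≤s}‖Q_τ-U_τ‖₂ ds` with
`C = e^{2κt}‖HᵀH‖₂ sup_{s≤t}‖F(U)_s‖₂`, `κ = ‖A‖₂ + ½ sup_{s≤t}‖Q_s‖₂‖HᵀH‖₂`. -/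
theorem stmt8 {d m : ℕ} (T : ℝ) (hT : 0 < T)
    (A : Matrix (Fin d) (Fin d) ℝ) (H : Matrix (Fin m) (Fin d) ℝ)
    (SB S0 : Matrix (Fin d) (Fin d) ℝ) (hSB : SB.PosSemidef) (hS0 : S0.PosDef)
    (Q U : ℝ → Matrix (Fin d) (Fin d) ℝ)
    (hQcont : ContinuousOn Q (Set.Icc 0 T)) (hUcont : ContinuousOn U (Set.Icc 0 T))
    (hQpos : ∀ t ∈ Set.Icc (0 : ℝ) T, (Q t).PosDef)
    (hUpos : ∀ t ∈ Set.Icc (0 : ℝ) T, (U t).PosDef)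
    (FQ FU : ℝ → Matrix (Fin d) (Fin d) ℝ)
    (hFQ0 : FQ 0 = S0) (hFU0 : FU 0 = S0)
    (hFQ : ∀ t ∈ Set.Icc (0 : ℝ) T, HasDerivAt FQ
      ((A - (1/2 : ℝ) • (Q t * Hᵀ * H)) * FQ t
        + FQ t * (A - (1/2 : ℝ) • (Q t * Hᵀ * H))ᵀ + SB) t)
    (hFU : ∀ t ∈ Set.Icc (0 : ℝ) T, HasDerivAt FU
      ((A - (1/2 : ℝ) • (U t * Hᵀ * H)) * FU t
        + FU t * (A - (1/2 : ℝ) • (U t * Hᵀ * H))ᵀ + SB) t) :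
    ∀ t ∈ Set.Icc (0 : ℝ) T,
      sSup ((fun s => specNorm (FQ s - FU s)) '' Set.Icc 0 t) ≤
        (Real.exp (2 * (specNorm A +
              (sSup ((fun s => specNorm (Q s)) '' Set.Icc 0 t)) / 2 * specNorm (Hᵀ * H)) * t)
          * specNorm (Hᵀ * H) * sSup ((fun s => specNorm (FU s)) '' Set.Icc 0 t)) *
        ∫ s in (0 : ℝ)..t, sSup ((fun τ => specNorm (Q τ - U τ)) '' Set.Icc 0 s) := by
  intro t ht
  obtain ⟨ht0, htT⟩ := ht
  have hsub : Icc (0:ℝ) t ⊆ Icc 0 T := Icc_subset_Icc le_rfl htT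
  -- continuity of specNorm
  have hspec : Continuous fun M : Matrix (Fin d) (Fin d) ℝ => specNorm M :=
    (φL d).continuous.norm
  -- abbreviations
  set nH : ℝ := specNorm (Hᵀ * H) with hnHdef
  set supQ : ℝ := sSup ((fun s => specNorm (Q s)) '' Set.Icc 0 t) with hsupQdef
  set supFU : ℝ := sSup ((fun s => specNorm (FU s)) '' Set.Icc 0 t) with hsupFUdef
  set g : ℝ → ℝ := fun τ => specNorm (Q τ - U τ) with hgdef
  set K : ℝ := 2 * (specNorm A + supQ / 2 * nH) with hKdef
  set c : ℝ := nH * supFU with hcdef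
  have hnH0 : 0 ≤ nH := specNorm_nonneg _
  -- bounds on Q
  have hQc : ContinuousOn (fun s => specNorm (Q s)) (Icc 0 t) :=
    hspec.comp_continuousOn (hQcont.mono hsub)
  have hbddQ : BddAbove ((fun s => specNorm (Q s)) '' Icc 0 t) :=
    (isCompact_Icc.image_of_continuousOn hQc).bddAbove
  have hsupQle : ∀ s ∈ Icc (0:ℝ) t, specNorm (Q s) ≤ supQ := fun s hs =>
    le_csSup hbddQ (Set.mem_image_of_mem _ hs)
  have hsupQ0 : 0 ≤ supQ := le_trans (specNorm_nonneg _) (hsupQle 0 ⟨le_rfl, ht0⟩)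
  -- bounds on FU
  have hFUc : ContinuousOn FU (Icc 0 t) := fun s hs =>
    (hFU s (hsub hs)).continuousAt.continuousWithinAt
  have hbddFU : BddAbove ((fun s => specNorm (FU s)) '' Icc 0 t) :=
    (isCompact_Icc.image_of_continuousOn (hspec.comp_continuousOn hFUc)).bddAbove
  have hsupFUle : ∀ s ∈ Icc (0:ℝ) t, specNorm (FU s) ≤ supFU := fun s hs =>
    le_csSup hbddFU (Set.mem_image_of_mem _ hs)
  have hsupFU0 : 0 ≤ supFU := le_trans (specNorm_nonneg _) (hsupFUle 0 ⟨le_rfl, ht0⟩)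
  have hK0 : 0 ≤ K := by
    rw [hKdef]
    have := specNorm_nonneg A
    nlinarith
  have hc0 : 0 ≤ c := mul_nonneg hnH0 hsupFU0
  -- running sup
  have hgc : ContinuousOn g (Icc 0 t) :=
    hspec.comp_continuousOn ((hQcont.mono hsub).sub (hUcont.mono hsub))
  have hbddg : ∀ v ∈ Icc (0:ℝ) t, BddAbove (g '' Icc 0 v) := fun v hv =>
    (isCompact_Icc.image_of_continuousOn (hgc.mono (Icc_subset_Icc le_rfl hv.2))).bddAbove
  have hgle : ∀ v ∈ Icc (0:ℝ) t, g v ≤ sSup (g '' Icc 0 v) := fun v hv =>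
    le_csSup (hbddg v hv) (Set.mem_image_of_mem _ ⟨hv.1, le_rfl⟩)
  have hfun_nonneg : ∀ v ∈ Icc (0:ℝ) t, 0 ≤ sSup (g '' Icc 0 v) := fun v hv =>
    le_trans (specNorm_nonneg _)
      (le_csSup (hbddg v hv) (Set.mem_image_of_mem _ ⟨le_rfl, hv.1⟩))
  -- the clamped running sup
  set clamp : ℝ → ℝ := fun s => max 0 (min s t) with hclampdef
  have hclampc : Continuous clamp := continuous_const.max (continuous_id.min continuous_const)
  have hclampmem : ∀ u, clamp u ∈ Icc (0:ℝ) t := fun u =>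
    ⟨le_max_left _ _, max_le ht0 (min_le_right _ _)⟩
  have hclampeq : ∀ u ∈ Icc (0:ℝ) t, clamp u = u := fun u hu => by
    rw [hclampdef]
    simp only []
    rw [min_eq_left hu.2, max_eq_right hu.1]
  set htil : ℝ → ℝ := fun u => sSup (g '' Icc 0 (clamp u)) with htildef
  have htilc : Continuous htil :=
    (runningSup_continuousOn ht0 hgc).comp_continuous hclampc hclampmem
  have htileq : ∀ u ∈ Icc (0:ℝ) t, htil u = sSup (g '' Icc 0 u) := fun u hu => by
    rw [htildef]
    simp only []
    rw [hclampeq u hu]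
  have htil0 : ∀ u, 0 ≤ htil u := fun u => hfun_nonneg (clamp u) (hclampmem u)
  -- derivative of the mapped difference
  have hfder : ∀ s ∈ Icc (0:ℝ) T,
      HasDerivAt (fun u => φL d (FQ u - FU u))
        (φL d (((A - (1/2 : ℝ) • (Q s * Hᵀ * H)) * FQ s
          + FQ s * (A - (1/2 : ℝ) • (Q s * Hᵀ * H))ᵀ + SB)
          - ((A - (1/2 : ℝ) • (U s * Hᵀ * H)) * FU s
          + FU s * (A - (1/2 : ℝ) • (U s * Hᵀ * H))ᵀ + SB))) s := fun s hs =>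
    (φL d).hasFDerivAt.comp_hasDerivAt s ((hFQ s hs).sub (hFU s hs))
  have hfcont : ContinuousOn (fun u => φL d (FQ u - FU u)) (Icc 0 t) := fun s hs =>
    (hfder s (hsub hs)).continuousAt.continuousWithinAt
  -- symmetry facts
  have hsymQ : ∀ s ∈ Icc (0:ℝ) T, (Q s)ᵀ = Q s := fun s hs => by
    have h1 := (hQpos s hs).1
    rwa [Matrix.IsHermitian, conjTranspose_eq_transpose_of_trivial] at h1
  have hsymU : ∀ s ∈ Icc (0:ℝ) T, (U s)ᵀ = U s := fun s hs => by
    have h1 := (hUpos s hs).1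
    rwa [Matrix.IsHermitian, conjTranspose_eq_transpose_of_trivial] at h1
  -- the norm bound on the derivative
  have hbound : ∀ s ∈ Ico (0:ℝ) t,
      ‖φL d (((A - (1/2 : ℝ) • (Q s * Hᵀ * H)) * FQ s
          + FQ s * (A - (1/2 : ℝ) • (Q s * Hᵀ * H))ᵀ + SB)
          - ((A - (1/2 : ℝ) • (U s * Hᵀ * H)) * FU s
          + FU s * (A - (1/2 : ℝ) • (U s * Hᵀ * H))ᵀ + SB))‖
        ≤ K * ‖φL d (FQ s - FU s)‖ + c * htil s := by
    intro s hs
    have hs' : s ∈ Icc (0:ℝ) t := ⟨hs.1, hs.2.le⟩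
    have hQs := hsymQ s (hsub hs')
    have hUs := hsymU s (hsub hs')
    rw [← specNorm_eq, ← specNorm_eq,
      lyapunov_diff_identity A H SB (Q s) (U s) (FQ s) (FU s) hQs hUs]
    -- bound the drift
    have hmulQ : specNorm (Q s * (Hᵀ * H)) ≤ supQ * nH := by
      rw [hnHdef]
      exact le_trans (specNorm_mul_le _ _)
        (mul_le_mul_of_nonneg_right (hsupQle s hs') (specNorm_nonneg _))
    have hRb : specNorm (A - (1/2 : ℝ) • (Q s * Hᵀ * H)) ≤ specNorm A + supQ / 2 * nH := by
      have h1 := specNorm_sub_le A ((1/2:ℝ) • (Q s * Hᵀ * H))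
      have h2 : specNorm ((1/2:ℝ) • (Q s * Hᵀ * H)) = 1/2 * specNorm (Q s * (Hᵀ * H)) := by
        rw [specNorm_smul, Matrix.mul_assoc]
        norm_num
      linarith
    have hRbT : specNorm ((A - (1/2 : ℝ) • (Q s * Hᵀ * H))ᵀ)
        ≤ specNorm A + supQ / 2 * nH := by
      rw [specNorm_transpose]; exact hRb
    -- bound the inhomogeneity
    have hgs : specNorm (Q s - U s) ≤ sSup (g '' Icc 0 s) := hgle s hs'
    have hFUb : specNorm (FU s) ≤ supFU := hsupFUle s hs'
    have m1 : specNorm ((Q s - U s) * (Hᵀ * H) * FU s)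
        ≤ specNorm (Q s - U s) * specNorm (Hᵀ * H) * specNorm (FU s) :=
      le_trans (specNorm_mul_le _ _)
        (mul_le_mul_of_nonneg_right (specNorm_mul_le _ _) (specNorm_nonneg _))
    have m2 : specNorm (FU s * (Hᵀ * H) * (Q s - U s))
        ≤ specNorm (FU s) * specNorm (Hᵀ * H) * specNorm (Q s - U s) :=
      le_trans (specNorm_mul_le _ _)
        (mul_le_mul_of_nonneg_right (specNorm_mul_le _ _) (specNorm_nonneg _))
    have e1 : specNorm (Q s - U s) * specNorm (Hᵀ * H) * specNorm (FU s)
        ≤ sSup (g '' Icc 0 s) * nH * supFU := by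
      rw [hnHdef]
      apply mul_le_mul _ hFUb (specNorm_nonneg _)
        (mul_nonneg (hfun_nonneg s hs') (specNorm_nonneg _))
      exact mul_le_mul_of_nonneg_right hgs (specNorm_nonneg _)
    have e2 : specNorm (FU s) * specNorm (Hᵀ * H) * specNorm (Q s - U s)
        ≤ supFU * nH * sSup (g '' Icc 0 s) := by
      rw [hnHdef]
      apply mul_le_mul _ hgs (specNorm_nonneg _)
        (mul_nonneg hsupFU0 (specNorm_nonneg _))
      exact mul_le_mul_of_nonneg_right hFUb (specNorm_nonneg _)
    have hW : specNorm ((-(1/2 : ℝ)) • ((Q s - U s) * (Hᵀ * H) * FU s)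
        + (-(1/2 : ℝ)) • (FU s * (Hᵀ * H) * (Q s - U s))) ≤ c * htil s := by
      have e3 := specNorm_add_le ((-(1/2 : ℝ)) • ((Q s - U s) * (Hᵀ * H) * FU s))
        ((-(1/2 : ℝ)) • (FU s * (Hᵀ * H) * (Q s - U s)))
      rw [specNorm_smul, specNorm_smul] at e3
      have habs : |(-(1/2) : ℝ)| = 1/2 := by norm_num
      rw [habs] at e3
      rw [htileq s hs', hcdef]
      nlinarith [m1, m2, e1, e2, e3]
    -- assemble
    have n1 := specNorm_mul_le (A - (1/2 : ℝ) • (Q s * Hᵀ * H)) (FQ s - FU s)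
    have n2 := specNorm_mul_le (FQ s - FU s) ((A - (1/2 : ℝ) • (Q s * Hᵀ * H))ᵀ)
    have n3 := mul_le_mul_of_nonneg_right hRb (specNorm_nonneg (FQ s - FU s))
    have n4 := mul_le_mul_of_nonneg_left hRbT (specNorm_nonneg (FQ s - FU s))
    have tri1 := specNorm_add_le
      ((A - (1/2 : ℝ) • (Q s * Hᵀ * H)) * (FQ s - FU s)
        + (FQ s - FU s) * (A - (1/2 : ℝ) • (Q s * Hᵀ * H))ᵀ)
      ((-(1/2 : ℝ)) • ((Q s - U s) * (Hᵀ * H) * FU s)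
        + (-(1/2 : ℝ)) • (FU s * (Hᵀ * H) * (Q s - U s)))
    have tri2 := specNorm_add_le ((A - (1/2 : ℝ) • (Q s * Hᵀ * H)) * (FQ s - FU s))
      ((FQ s - FU s) * (A - (1/2 : ℝ) • (Q s * Hᵀ * H))ᵀ)
    rw [hKdef]
    nlinarith [hW, tri1, tri2, n1, n2, n3, n4]
  -- Gronwall
  have hf0 : (fun u => φL d (FQ u - FU u)) 0 = 0 := by
    simp only []
    rw [hFQ0, hFU0, sub_self, map_zero]
  have hG := gronwall_aux hK0 hc0 hfcont
    (fun s hs => (hfder s (hsub ⟨hs.1, hs.2.le⟩)).hasDerivWithinAt)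
    hf0 htilc htil0 hbound
  -- conclude
  apply csSup_le ((Set.nonempty_Icc.2 ht0).image _)
  rintro x ⟨s, hs, rfl⟩
  show specNorm (FQ s - FU s) ≤ _
  rw [specNorm_eq]
  calc ‖φL d (FQ s - FU s)‖ ≤ Real.exp (K * s) * (c * ∫ u in (0:ℝ)..s, htil u) := hG s hs
    _ ≤ Real.exp (K * t) * (c * ∫ u in (0:ℝ)..t, htil u) := by
        have hi : (∫ u in (0:ℝ)..s, htil u) ≤ ∫ u in (0:ℝ)..t, htil u :=
          intervalIntegral.integral_mono_interval le_rfl hs.1 hs.2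
            (Filter.Eventually.of_forall fun u => htil0 u) (htilc.intervalIntegrable 0 t)
        have he : Real.exp (K * s) ≤ Real.exp (K * t) :=
          Real.exp_le_exp.2 (mul_le_mul_of_nonneg_left hs.2 hK0)
        have hi0 : 0 ≤ ∫ u in (0:ℝ)..s, htil u :=
          intervalIntegral.integral_nonneg hs.1 (fun u _ => htil0 u)
        exact mul_le_mul he (mul_le_mul_of_nonneg_left hi hc0)
          (mul_nonneg hc0 hi0) (Real.exp_pos _).le
    _ = (Real.exp (K * t) * nH * supFU) * ∫ u in (0:ℝ)..t, htil u := by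
        rw [hcdef]; ring
    _ = (Real.exp (K * t) * nH * supFU) * ∫ u in (0:ℝ)..t, sSup (g '' Icc 0 u) := by
        congr 1
        apply intervalIntegral.integral_congr
        intro u hu
        rw [Set.uIcc_of_le ht0] at hu
        exact htileq u hu
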